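/- Let F be a field, m a natural number, M : Matrix (Fin m) (Fin m) (Polynomial F) a square matrix of univariate polynomials, and t ∈ F. Let R := finrank F (LinearMap.ker ((M.map (Polynomial.eval t)).mulVecLin)), the rank of the kernel of the F-matrix obtained by evaluating every entry of M at t. Then (Polynomial.X − Polynomial.C t) ^ R divides the determinant M.det in Polynomial F. In particular, if det(M(t)) = 0 and M.det ≠ 0, then t is a root of the polynomial M.det of multiplicity at least R. -/

import Mathlib

open Module Polynomial

theorem stmt_13 (F : Type*) [Field F] (m : ℕ)
    (M : Matrix (Fin m) (Fin m) (Polynomial F)) (t : F)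
    (R : ℕ)
    (hR : R = finrank F (LinearMap.ker (Matrix.mulVecLin (M.map (Polynomial.eval t))))) :
    (Polynomial.X - Polynomial.C t) ^ R ∣ M.det ∧
      ((M.map (Polynomial.eval t)).det = 0 → M.det ≠ 0 →
        R ≤ Polynomial.rootMultiplicity t M.det) := by
  have main : (Polynomial.X - Polynomial.C t) ^ R ∣ M.det := by
    set K := LinearMap.ker (Matrix.mulVecLin (M.map (Polynomial.eval t))) with hKdef
    obtain ⟨K', hcompl⟩ := Submodule.exists_isCompl K
    have hsum : finrank F K + finrank F K' = m := by
      rw [Submodule.finrank_add_eq_of_isCompl hcompl, Module.finrank_fin_fun]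
    have hRm : R ≤ m := by omega
    have hK'rank : finrank F K' = m - R := by omega
    let bK : Basis (Fin R) F K := (Module.finBasis F K).reindex (finCongr hR.symm)
    let bK' : Basis (Fin (m - R)) F K' :=
      (Module.finBasis F K').reindex (finCongr hK'rank)
    let e : Fin R ⊕ Fin (m - R) ≃ Fin m :=
      finSumFinEquiv.trans (finCongr (by omega))
    let c : Basis (Fin m) F (Fin m → F) :=
      (((bK.prod bK').map (Submodule.prodEquivOfIsCompl K K' hcompl)).reindex e)
    have hcK : ∀ j : Fin R, c (e (Sum.inl j)) ∈ K := by
      intro j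
      simp only [c, Basis.reindex_apply, Equiv.symm_apply_apply, Basis.map_apply,
        Basis.prod_apply, Sum.elim_inl, LinearMap.coe_inl,
        Submodule.coe_prodEquivOfIsCompl]
      simp
    let Cmat : Matrix (Fin m) (Fin m) F := Matrix.of fun i j => c j i
    have hCdet : IsUnit Cmat.det := by
      have h1 : Cmat = (Pi.basisFun F (Fin m)).toMatrix c := by
        ext i j
        simp [Cmat, Basis.toMatrix_apply]
      have := (Pi.basisFun F (Fin m)).isUnit_det c
      rwa [Basis.det_apply, ← h1] at this
    set N : Matrix (Fin m) (Fin m) (Polynomial F) := M * Cmat.map Polynomial.C with hNdef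
    have hcol : ∀ (j : Fin R) (i : Fin m),
        Polynomial.eval t (N i (e (Sum.inl j))) = 0 := by
      intro j i
      have hmem := hcK j
      rw [hKdef, LinearMap.mem_ker] at hmem
      have := congrFun hmem i
      simp only [Matrix.mulVecLin_apply, Matrix.mulVec, dotProduct,
        Matrix.map_apply] at this
      simp only [N, Matrix.mul_apply, Matrix.map_apply, Polynomial.eval_finset_sum,
        Polynomial.eval_mul, Polynomial.eval_C]
      convert this using 2
      all_goals rfl
    have hdvd : ∀ (i j : Fin m), (e.symm j).isLeft →
        (Polynomial.X - Polynomial.C t) ∣ N i j := by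
      intro i j hj
      rw [Polynomial.dvd_iff_isRoot]
      obtain ⟨l, hl⟩ := Sum.isLeft_iff.mp hj
      have : j = e (Sum.inl l) := by rw [← hl, Equiv.apply_symm_apply]
      rw [this]
      exact hcol l i
    let A : Matrix (Fin m) (Fin m) (Polynomial F) := Matrix.of fun i j =>
      if h : (e.symm j).isLeft then (hdvd i j h).choose else N i j
    let v : Fin m → Polynomial F := fun j =>
      if (e.symm j).isLeft then Polynomial.X - Polynomial.C t else 1
    have hN : N = Matrix.of fun i j => v j * A i j := by
      refine Matrix.ext fun i j => ?_
      simp only [A, v, Matrix.of_apply]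
      by_cases h : (e.symm j).isLeft
      · simp only [h, if_true, dif_pos h]
        exact (hdvd i j h).choose_spec
      · simp [h]
    have hprod : ∏ j, v j = (Polynomial.X - Polynomial.C t) ^ R := by
      rw [← Equiv.prod_comp e (fun j => v j), Fintype.prod_sum_type]
      have h1 : ∀ j : Fin R, v (e (Sum.inl j)) = Polynomial.X - Polynomial.C t := by
        intro j; simp [v]
      have h2 : ∀ j : Fin (m - R), v (e (Sum.inr j)) = 1 := by
        intro j; simp [v]
      simp [h1, h2]
    have hdetN : N.det = (Polynomial.X - Polynomial.C t) ^ R * A.det := by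
      rw [hN, Matrix.det_mul_row, hprod]
    have hdetN2 : N.det = M.det * Polynomial.C Cmat.det := by
      rw [hNdef, Matrix.det_mul]
      congr 1
      rw [RingHom.map_det]
      rfl
    have hu : IsUnit (Polynomial.C Cmat.det) := hCdet.map Polynomial.C
    have : (Polynomial.X - Polynomial.C t) ^ R ∣ M.det * Polynomial.C Cmat.det := by
      rw [← hdetN2, hdetN]; exact Dvd.intro _ rfl
    exact hu.dvd_mul_right.mp this
  refine ⟨main, fun _ hne => ?_⟩
  rw [Polynomial.le_rootMultiplicity_iff hne]
  exact main
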